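/- Sum formula for double zeta values: for every integer k ≥ 3, ∑_{a=2}^{k-1} ζ(a, k-a) = ζ(k), i.e., ζ(k-1,1) + ζ(k-2,2) + ... + ζ(2,k-2) = ζ(k). -/

import Mathlib

open Finset

/-- Double zeta value `ζ(a,b) = ∑_{m > n ≥ 1} 1/(m^a n^b)`. -/
noncomputable def doubleZeta (a b : ℕ) : ℝ :=
  ∑' p : {p : ℕ × ℕ // 1 ≤ p.2 ∧ p.2 < p.1}, 1 / ((p.1.1 : ℝ) ^ a * (p.1.2 : ℝ) ^ b)

namespace SumFormulaAux

open ENNReal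

/-- reindexing: `(i, j) ↦ (m, n) = (i + j + 2, j + 1)`. -/
def e1 : ℕ × ℕ ≃ {p : ℕ × ℕ // 1 ≤ p.2 ∧ p.2 < p.1} where
  toFun q := ⟨(q.1 + q.2 + 2, q.2 + 1), by constructor <;> omega⟩
  invFun s := (s.1.1 - s.1.2 - 1, s.1.2 - 1)
  left_inv q := by
    obtain ⟨i, j⟩ := q
    simp only [Prod.mk.injEq]
    exact ⟨by omega, by omega⟩
  right_inv s := by
    obtain ⟨⟨m, n⟩, h1, h2⟩ := s
    have h1' : 1 ≤ n := h1
    have h2' : n < m := h2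
    simp only [Subtype.mk.injEq, Prod.mk.injEq]
    exact ⟨by omega, by omega⟩

/-- reindexing: `(i, t) ↦ (j, t) = (i + t + 1, t)`. -/
def e2 : ℕ × ℕ ≃ {p : ℕ × ℕ // p.2 < p.1} where
  toFun q := ⟨(q.1 + q.2 + 1, q.2), by omega⟩
  invFun s := (s.1.1 - s.1.2 - 1, s.1.2)
  left_inv q := by
    obtain ⟨i, t⟩ := q
    simp only [Prod.mk.injEq]
    exact ⟨by omega, trivial⟩
  right_inv s := by
    obtain ⟨⟨m, n⟩, h⟩ := s
    have h' : n < m := h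
    simp only [Subtype.mk.injEq, Prod.mk.injEq]
    exact ⟨by omega, trivial⟩

/-- `ζ(a,b)` in `ℝ≥0∞`, reindexed over `ℕ × ℕ`. -/
noncomputable def zE (a b : ℕ) : ℝ≥0∞ :=
  ∑' q : ℕ × ℕ, ENNReal.ofReal (1 / (((q.1 : ℝ) + q.2 + 2) ^ a * ((q.2 : ℝ) + 1) ^ b))

/-- the combined sum, reindexed over `ℕ × ℕ`. -/
noncomputable def hE (c : ℕ) : ℝ≥0∞ :=
  ∑' q : ℕ × ℕ,
    ENNReal.ofReal (1 / (((q.1 : ℝ) + 1) * ((q.1 : ℝ) + q.2 + 2) * ((q.2 : ℝ) + 1) ^ c))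

/-- `ζ(c)` in `ℝ≥0∞`. -/
noncomputable def ZK (c : ℕ) : ℝ≥0∞ := ∑' m : ℕ, ENNReal.ofReal (1 / ((m : ℝ) + 1) ^ c)

/-- partial fraction / geometric sum identity. -/
theorem L1 {k : ℕ} (hk : 3 ≤ k) (i j : ℕ) :
    1 / (((i : ℝ) + 1) * ((i : ℝ) + j + 2) ^ (k - 1))
      + ∑ a ∈ Icc 2 (k - 1), 1 / (((i : ℝ) + j + 2) ^ a * ((j : ℝ) + 1) ^ (k - a))
    = 1 / (((i : ℝ) + 1) * ((i : ℝ) + j + 2) * ((j : ℝ) + 1) ^ (k - 2)) := by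
  set m : ℝ := (i : ℝ) + j + 2 with hm
  set n : ℝ := (j : ℝ) + 1 with hn
  have hm0 : (0 : ℝ) < m := by positivity
  have hn0 : (0 : ℝ) < n := by positivity
  have hi0 : (0 : ℝ) < (i : ℝ) + 1 := by positivity
  have hIcc : ∑ a ∈ Icc 2 (k - 1), 1 / (m ^ a * n ^ (k - a))
      = (∑ t ∈ range (k - 2), n ^ t * m ^ (k - 2 - 1 - t)) / (m ^ (k - 1) * n ^ (k - 2)) := by
    rw [Finset.sum_div]
    have h1 : Icc 2 (k - 1) = Ico 2 k := by
      rw [← Finset.Ico_add_one_right_eq_Icc]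
      congr 1
      omega
    rw [h1, Finset.sum_Ico_eq_sum_range]
    refine Finset.sum_congr rfl fun t ht => ?_
    have ht' : t < k - 2 := Finset.mem_range.mp ht
    rw [div_eq_div_iff (by positivity) (by positivity), one_mul]
    have e1 : m ^ (k - 1) = m ^ (k - 2 - 1 - t) * m ^ (2 + t) := by
      rw [← pow_add]; congr 1; omega
    have e2 : n ^ (k - 2) = n ^ t * n ^ (k - (2 + t)) := by
      rw [← pow_add]; congr 1; omega
    rw [e1, e2]; ring
  rw [hIcc]
  have hgeom := geom_sum₂_mul n m (k - 2)
  set G : ℝ := ∑ t ∈ range (k - 2), n ^ t * m ^ (k - 2 - 1 - t) with hG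
  have hnm : n - m = -(((i : ℝ) + 1)) := by rw [hm, hn]; ring
  have hpow : m ^ (k - 1) = m ^ (k - 2) * m := by
    rw [← pow_succ]; congr 1; omega
  rw [hpow]
  have hM : (0 : ℝ) < m ^ (k - 2) := by positivity
  have hN : (0 : ℝ) < n ^ (k - 2) := by positivity
  rw [hnm] at hgeom
  rw [div_add_div _ _ (by positivity) (by positivity), div_eq_div_iff (by positivity) (by positivity)]
  linear_combination (-(((i : ℝ) + 1) * m ^ (k - 2) * m ^ 2 * n ^ (k - 2))) * hgeom

/-- telescoping finite sum identity. -/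
theorem L3 {k : ℕ} (hk : 3 ≤ k) (i j : ℕ) :
    1 / (((i : ℝ) + 1) * ((i : ℝ) + j + 2) * ((j : ℝ) + 1) ^ (k - 2))
      = ∑ t ∈ range (j + 1),
          (1 / ((j : ℝ) + 1) ^ (k - 1)) * (1 / (((i : ℝ) + t + 1) * ((i : ℝ) + t + 2))) := by
  rw [← Finset.mul_sum]
  have htel : ∑ t ∈ range (j + 1), (1 / (((i : ℝ) + t + 1) * ((i : ℝ) + t + 2)))
      = 1 / ((i : ℝ) + 1) - 1 / ((i : ℝ) + j + 2) := by
    have h := Finset.sum_range_sub' (fun t : ℕ => 1 / ((i : ℝ) + t + 1)) (j + 1)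
    have h2 : ∀ t ∈ range (j + 1),
        1 / (((i : ℝ) + t + 1) * ((i : ℝ) + t + 2))
          = 1 / ((i : ℝ) + t + 1) - 1 / ((i : ℝ) + (t + 1 : ℕ) + 1) := by
      intro t _
      push_cast
      rw [div_sub_div _ _ (by positivity) (by positivity)]
      rw [div_eq_div_iff (by positivity) (by positivity)]
      ring
    rw [Finset.sum_congr rfl h2, h]
    push_cast
    ring
  rw [htel]
  have hpow : ((j : ℝ) + 1) ^ (k - 1) = ((j : ℝ) + 1) ^ (k - 2) * ((j : ℝ) + 1) := by
    rw [← pow_succ]; congr 1; omega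
  rw [hpow]
  have h1 : (0 : ℝ) < (i : ℝ) + 1 := by positivity
  have h2 : (0 : ℝ) < (i : ℝ) + j + 2 := by positivity
  have h3 : (0 : ℝ) < ((j : ℝ) + 1) ^ (k - 2) := by positivity
  field_simp
  ring

/-- basic telescoping series. -/
theorem L2 (c : ℕ) :
    HasSum (fun i : ℕ => 1 / (((i : ℝ) + c + 1) * ((i : ℝ) + c + 2))) (1 / ((c : ℝ) + 1)) := by
  rw [hasSum_iff_tendsto_nat_of_nonneg (fun i => by positivity)]
  have hps : ∀ N : ℕ, ∑ i ∈ range N, 1 / (((i : ℝ) + c + 1) * ((i : ℝ) + c + 2))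
      = 1 / ((c : ℝ) + 1) - 1 / ((N : ℝ) + c + 1) := by
    intro N
    have h := Finset.sum_range_sub' (fun i : ℕ => 1 / ((i : ℝ) + c + 1)) N
    have h2 : ∀ t ∈ range N,
        1 / (((t : ℝ) + c + 1) * ((t : ℝ) + c + 2))
          = 1 / ((t : ℝ) + c + 1) - 1 / (((t + 1 : ℕ) : ℝ) + c + 1) := by
      intro t _
      push_cast
      rw [div_sub_div _ _ (by positivity) (by positivity)]
      rw [div_eq_div_iff (by positivity) (by positivity)]
      ring
    rw [Finset.sum_congr rfl h2, h]
    norm_num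
  simp only [hps]
  have hlim : Filter.Tendsto (fun N : ℕ => 1 / ((N : ℝ) + c + 1)) Filter.atTop (nhds 0) := by
    simp only [one_div]
    apply Filter.Tendsto.inv_tendsto_atTop
    apply Filter.tendsto_atTop_add_const_right
    apply Filter.tendsto_atTop_add_const_right
    exact tendsto_natCast_atTop_atTop
  simpa using tendsto_const_nhds.sub hlim

/-- triangular reindexing. -/
theorem tsum_triangle (c : ℕ → ℕ → ℝ≥0∞) :
    ∑' q : ℕ × ℕ, c (q.1 + q.2 + 1) q.2 = ∑' j, ∑ t ∈ range j, c j t := by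
  have h1 : ∀ j, ∑ t ∈ range j, c j t = ∑' t, if t < j then c j t else 0 := by
    intro j
    rw [tsum_eq_sum (s := range j) (fun t ht => if_neg (by simpa using ht))]
    exact (Finset.sum_congr rfl fun t ht => by simp [Finset.mem_range.mp ht]).symm
  simp only [h1]
  rw [← ENNReal.tsum_prod' (f := fun p : ℕ × ℕ => if p.2 < p.1 then c p.1 p.2 else 0)]
  have h2 : ∑' q : ℕ × ℕ, c (q.1 + q.2 + 1) q.2
      = ∑' s : {p : ℕ × ℕ // p.2 < p.1}, c s.1.1 s.1.2 :=
    e2.tsum_eq (fun s : {p : ℕ × ℕ // p.2 < p.1} => c s.1.1 s.1.2)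
  have h4 : ∑' s : {p : ℕ × ℕ // p.2 < p.1}, c s.1.1 s.1.2
      = ∑' p : ℕ × ℕ, Set.indicator {p : ℕ × ℕ | p.2 < p.1} (fun p => c p.1 p.2) p :=
    tsum_subtype {p : ℕ × ℕ | p.2 < p.1} (fun p => c p.1 p.2)
  rw [h2, h4]
  refine tsum_congr fun p => ?_
  rw [Set.indicator_apply]
  simp [Set.mem_setOf_eq]

/-- symmetry: the `g`-sum equals `ζ(c,1)`. -/
theorem gE_eq (c : ℕ) :
    zE c 1 = ∑' q : ℕ × ℕ,
      ENNReal.ofReal (1 / (((q.1 : ℝ) + 1) * ((q.1 : ℝ) + q.2 + 2) ^ c)) := by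
  rw [zE, ← (Equiv.prodComm ℕ ℕ).tsum_eq (fun q : ℕ × ℕ =>
    ENNReal.ofReal (1 / (((q.1 : ℝ) + 1) * ((q.1 : ℝ) + q.2 + 2) ^ c)))]
  refine tsum_congr fun q => ?_
  obtain ⟨i, j⟩ := q
  simp only [Equiv.prodComm_apply, Prod.swap_prod_mk]
  congr 1
  rw [pow_one]
  ring

theorem stepA {k : ℕ} (hk : 3 ≤ k) :
    (∑ a ∈ Icc 2 (k - 1), zE a (k - a)) + zE (k - 1) 1 = hE (k - 2) := by
  rw [gE_eq (k - 1)]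
  simp only [zE, hE]
  rw [← Summable.tsum_finsetSum (fun a _ => ENNReal.summable), ← ENNReal.tsum_add]
  refine tsum_congr fun q => ?_
  rw [← ENNReal.ofReal_sum_of_nonneg (fun a _ => by positivity),
    ← ENNReal.ofReal_add (by positivity) (by positivity)]
  congr 1
  rw [add_comm]
  exact L1 hk q.1 q.2

theorem stepB {k : ℕ} (hk : 3 ≤ k) : hE (k - 2) = ZK k + zE (k - 1) 1 := by
  have inner : ∀ j : ℕ,
      (∑' i : ℕ, ENNReal.ofReal (1 / (((i : ℝ) + 1) * ((i : ℝ) + j + 2) * ((j : ℝ) + 1) ^ (k - 2))))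
        = ENNReal.ofReal (1 / ((j : ℝ) + 1) ^ k)
          + ∑ t ∈ range j, ENNReal.ofReal (1 / (((j : ℝ) + 1) ^ (k - 1) * ((t : ℝ) + 1))) := by
    intro j
    have e : ∀ i : ℕ,
        ENNReal.ofReal (1 / (((i : ℝ) + 1) * ((i : ℝ) + j + 2) * ((j : ℝ) + 1) ^ (k - 2)))
          = ∑ t ∈ range (j + 1), ENNReal.ofReal
              ((1 / ((j : ℝ) + 1) ^ (k - 1)) * (1 / (((i : ℝ) + t + 1) * ((i : ℝ) + t + 2)))) := by
      intro i
      rw [← ENNReal.ofReal_sum_of_nonneg (fun t _ => by positivity), ← L3 hk i j]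
    simp only [e]
    rw [Summable.tsum_finsetSum (fun t _ => ENNReal.summable)]
    have hsum : ∀ t : ℕ,
        (∑' i : ℕ, ENNReal.ofReal
            ((1 / ((j : ℝ) + 1) ^ (k - 1)) * (1 / (((i : ℝ) + t + 1) * ((i : ℝ) + t + 2)))))
          = ENNReal.ofReal ((1 / ((j : ℝ) + 1) ^ (k - 1)) * (1 / ((t : ℝ) + 1))) := by
      intro t
      have h2 := (L2 t).mul_left (1 / ((j : ℝ) + 1) ^ (k - 1))
      rw [← h2.tsum_eq]
      exact (ENNReal.ofReal_tsum_of_nonneg (fun i => by positivity) h2.summable).symm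
    simp only [hsum]
    rw [Finset.sum_range_succ, add_comm]
    congr 1
    · congr 1
      rw [one_div_mul_one_div]
      congr 1
      rw [← pow_succ]
      congr 1
      omega
    · refine Finset.sum_congr rfl fun t _ => ?_
      congr 1
      rw [one_div_mul_one_div]
  rw [hE, ENNReal.tsum_prod', ENNReal.tsum_comm]
  simp only [inner]
  rw [ENNReal.tsum_add]
  congr 1
  rw [← tsum_triangle (fun j t => ENNReal.ofReal (1 / (((j : ℝ) + 1) ^ (k - 1) * ((t : ℝ) + 1))))]
  rw [zE]
  refine tsum_congr fun q => ?_
  congr 1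
  rw [pow_one]
  push_cast
  ring_nf

theorem b_summable : Summable (fun n : ℕ => 1 / (((n : ℝ) + 1) * Real.sqrt ((n : ℝ) + 1))) := by
  have h : Summable (fun n : ℕ => 1 / (n : ℝ) ^ ((3 : ℝ) / 2)) :=
    Real.summable_one_div_nat_rpow.mpr (by norm_num)
  have h2 := (summable_nat_add_iff 1).mpr h
  refine h2.congr fun n => ?_
  have hx : (0 : ℝ) < (n : ℝ) + 1 := by positivity
  have hc : (((n + 1 : ℕ) : ℝ)) = (n : ℝ) + 1 := by push_cast; ring
  rw [hc, show ((3 : ℝ) / 2) = 1 + 1 / 2 by norm_num, Real.rpow_add hx, Real.rpow_one,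
    Real.sqrt_eq_rpow]

theorem hE_ne_top {k : ℕ} (hk : 3 ≤ k) : hE (k - 2) ≠ ⊤ := by
  have hb : ∀ q : ℕ × ℕ,
      ENNReal.ofReal (1 / (((q.1 : ℝ) + 1) * ((q.1 : ℝ) + q.2 + 2) * ((q.2 : ℝ) + 1) ^ (k - 2)))
        ≤ ENNReal.ofReal ((1 / (((q.1 : ℝ) + 1) * Real.sqrt ((q.1 : ℝ) + 1)))
            * (1 / (((q.2 : ℝ) + 1) * Real.sqrt ((q.2 : ℝ) + 1)))) := by
    intro q
    apply ENNReal.ofReal_le_ofReal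
    rw [one_div_mul_one_div]
    apply one_div_le_one_div_of_le (by positivity)
    have s1 : Real.sqrt ((q.1 : ℝ) + 1) * Real.sqrt ((q.2 : ℝ) + 1) ≤ (q.1 : ℝ) + q.2 + 2 := by
      nlinarith [Real.sq_sqrt (show (0 : ℝ) ≤ (q.1 : ℝ) + 1 by positivity),
        Real.sq_sqrt (show (0 : ℝ) ≤ (q.2 : ℝ) + 1 by positivity),
        sq_nonneg (Real.sqrt ((q.1 : ℝ) + 1) - Real.sqrt ((q.2 : ℝ) + 1))]
    have s2 : ((q.2 : ℝ) + 1) ≤ ((q.2 : ℝ) + 1) ^ (k - 2) := by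
      apply le_self_pow₀
      · have h0 : (0 : ℝ) ≤ (q.2 : ℝ) := Nat.cast_nonneg q.2
        linarith
      · omega
    have p1 : (0 : ℝ) < (q.1 : ℝ) + 1 := by positivity
    have p2 : (0 : ℝ) < (q.2 : ℝ) + 1 := by positivity
    have p3 : (0 : ℝ) ≤ Real.sqrt ((q.1 : ℝ) + 1) := Real.sqrt_nonneg _
    have p4 : (0 : ℝ) ≤ Real.sqrt ((q.2 : ℝ) + 1) := Real.sqrt_nonneg _
    calc ((q.1 : ℝ) + 1) * Real.sqrt ((q.1 : ℝ) + 1) * (((q.2 : ℝ) + 1) * Real.sqrt ((q.2 : ℝ) + 1))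
        = ((q.1 : ℝ) + 1) * ((q.2 : ℝ) + 1) * (Real.sqrt ((q.1 : ℝ) + 1) * Real.sqrt ((q.2 : ℝ) + 1)) := by ring
      _ ≤ ((q.1 : ℝ) + 1) * ((q.2 : ℝ) + 1) * ((q.1 : ℝ) + q.2 + 2) := by
          apply mul_le_mul_of_nonneg_left s1 (by positivity)
      _ ≤ ((q.1 : ℝ) + 1) * ((q.2 : ℝ) + 1) ^ (k - 2) * ((q.1 : ℝ) + q.2 + 2) := by
          have := mul_le_mul_of_nonneg_left s2 (le_of_lt p1)
          nlinarith [this, (show (0:ℝ) < (q.1 : ℝ) + q.2 + 2 by positivity)]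
      _ = ((q.1 : ℝ) + 1) * ((q.1 : ℝ) + q.2 + 2) * ((q.2 : ℝ) + 1) ^ (k - 2) := by ring
  have hfin : (∑' q : ℕ × ℕ, ENNReal.ofReal ((1 / (((q.1 : ℝ) + 1) * Real.sqrt ((q.1 : ℝ) + 1)))
      * (1 / (((q.2 : ℝ) + 1) * Real.sqrt ((q.2 : ℝ) + 1))))) ≠ ⊤ := by
    have heq : (∑' q : ℕ × ℕ, ENNReal.ofReal ((1 / (((q.1 : ℝ) + 1) * Real.sqrt ((q.1 : ℝ) + 1)))
        * (1 / (((q.2 : ℝ) + 1) * Real.sqrt ((q.2 : ℝ) + 1)))))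
        = (∑' n : ℕ, ENNReal.ofReal (1 / (((n : ℝ) + 1) * Real.sqrt ((n : ℝ) + 1))))
          * (∑' n : ℕ, ENNReal.ofReal (1 / (((n : ℝ) + 1) * Real.sqrt ((n : ℝ) + 1)))) := by
      have : ∀ q : ℕ × ℕ, ENNReal.ofReal ((1 / (((q.1 : ℝ) + 1) * Real.sqrt ((q.1 : ℝ) + 1)))
          * (1 / (((q.2 : ℝ) + 1) * Real.sqrt ((q.2 : ℝ) + 1))))
          = ENNReal.ofReal (1 / (((q.1 : ℝ) + 1) * Real.sqrt ((q.1 : ℝ) + 1)))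
            * ENNReal.ofReal (1 / (((q.2 : ℝ) + 1) * Real.sqrt ((q.2 : ℝ) + 1))) := fun q =>
        ENNReal.ofReal_mul (by positivity)
      simp only [this]
      rw [ENNReal.tsum_prod']
      simp only [ENNReal.tsum_mul_left]
      rw [ENNReal.tsum_mul_right]
    rw [heq, ← ENNReal.ofReal_tsum_of_nonneg (fun n => by positivity) b_summable]
    exact ENNReal.mul_ne_top ENNReal.ofReal_ne_top ENNReal.ofReal_ne_top
  exact ne_top_of_le_ne_top hfin (ENNReal.tsum_le_tsum hb)

theorem ZK_ne_top {k : ℕ} (hk : 3 ≤ k) : ZK k ≠ ⊤ := by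
  have h : Summable (fun m : ℕ => 1 / ((m : ℝ) + 1) ^ k) := by
    have h0 : Summable (fun n : ℕ => 1 / (n : ℝ) ^ k) :=
      Real.summable_one_div_nat_pow.mpr (by omega)
    have h2 := (summable_nat_add_iff 1).mpr h0
    refine h2.congr fun n => by push_cast; ring
  rw [ZK, ← ENNReal.ofReal_tsum_of_nonneg (fun m => by positivity) h]
  exact ENNReal.ofReal_ne_top

end SumFormulaAux

/-- Sum formula for double zeta values. -/
theorem sum_formula_double_zeta (k : ℕ) (hk : 3 ≤ k) :
    ∑ a ∈ Finset.Icc 2 (k - 1), doubleZeta a (k - a)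
      = ∑' m : ℕ, 1 / ((m : ℝ) + 1) ^ k := by
  open SumFormulaAux in
  have key : ∑ a ∈ Finset.Icc 2 (k - 1), SumFormulaAux.zE a (k - a) = SumFormulaAux.ZK k := by
    have h1 := SumFormulaAux.stepA hk
    rw [SumFormulaAux.stepB hk] at h1
    have hfin : SumFormulaAux.zE (k - 1) 1 ≠ ⊤ := by
      have hle : SumFormulaAux.zE (k - 1) 1 ≤ SumFormulaAux.hE (k - 2) := by
        rw [SumFormulaAux.stepB hk]; exact le_add_self
      exact ne_top_of_le_ne_top (SumFormulaAux.hE_ne_top hk) hle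
    exact (ENNReal.add_left_inj hfin).mp h1
  have hZfin := SumFormulaAux.ZK_ne_top hk
  have hterm : ∀ a ∈ Finset.Icc 2 (k - 1), SumFormulaAux.zE a (k - a) ≠ ⊤ := by
    intro a ha
    refine ne_top_of_le_ne_top (key ▸ hZfin) ?_
    exact Finset.single_le_sum (f := fun a => SumFormulaAux.zE a (k - a))
      (fun _ _ => zero_le) ha
  have hdz : ∀ a b : ℕ, doubleZeta a b = (SumFormulaAux.zE a b).toReal := by
    intro a b
    have h1 : doubleZeta a b = ∑' q : ℕ × ℕ,
        1 / (((SumFormulaAux.e1 q).1.1 : ℝ) ^ a * ((SumFormulaAux.e1 q).1.2 : ℝ) ^ b) :=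
      (SumFormulaAux.e1.tsum_eq
        (fun p : {p : ℕ × ℕ // 1 ≤ p.2 ∧ p.2 < p.1} =>
          1 / ((p.1.1 : ℝ) ^ a * (p.1.2 : ℝ) ^ b))).symm
    rw [h1, SumFormulaAux.zE,
      ENNReal.tsum_toReal_eq (fun _ => ENNReal.ofReal_ne_top)]
    refine tsum_congr fun q => ?_
    rw [ENNReal.toReal_ofReal (by positivity)]
    have e : ((SumFormulaAux.e1 q).1.1 : ℕ) = q.1 + q.2 + 2 := rfl
    have e' : ((SumFormulaAux.e1 q).1.2 : ℕ) = q.2 + 1 := rfl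
    rw [e, e']
    push_cast
    ring_nf
  have hrhs : ∑' m : ℕ, 1 / ((m : ℝ) + 1) ^ k = (SumFormulaAux.ZK k).toReal := by
    rw [SumFormulaAux.ZK, ENNReal.tsum_toReal_eq (fun _ => ENNReal.ofReal_ne_top)]
    exact tsum_congr fun m => (ENNReal.toReal_ofReal (by positivity)).symm
  rw [hrhs, ← key, ENNReal.toReal_sum hterm]
  exact Finset.sum_congr rfl fun a ha => hdz a (k - a)
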